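/- (Theorem 1, part 2: vanishing of successive differences and primal residual) Consider the ADMM iteration for the sparse array beamforming problem, where R_x is Hermitian positive definite with λ_min(R_x) > 0, and suppose ρ ≥ max{ 2√2 · λ_max(R_x), 2λ_max²(R_x)/λ_min(R_x) }. Then, as k → ∞, ‖v_{k+1} − v_k‖₂ → 0, ‖u_{k+1} − u_k‖₂ → 0, ‖w_{k+1} − w_k‖₂ → 0, and ‖w_k − v_k‖₂ → 0. -/

import Mathlib

open scoped ComplexOrder

/-- Action of an `M×M` complex matrix on `ℂ^M` (Euclidean space). -/
noncomputable def mulVecE {M : ℕ} (A : Matrix (Fin M) (Fin M) ℂ)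
    (x : EuclideanSpace ℂ (Fin M)) : EuclideanSpace ℂ (Fin M) :=
  WithLp.toLp 2 (fun i => ∑ j, A i j * x j)

/-- Augmented Lagrangian `L(w,v,u) = λ‖w‖₁ + vᴴR_x v + (ρ/2)(‖w−v+u‖₂² − ‖u‖₂²)`. -/
noncomputable def lagr {M : ℕ} (Rx : Matrix (Fin M) (Fin M) ℂ) (lam ρ : ℝ)
    (w v u : EuclideanSpace ℂ (Fin M)) : ℝ :=
  lam * ∑ i, ‖w i‖ + (inner ℂ v (mulVecE Rx v) : ℂ).re
    + ρ / 2 * (‖w - v + u‖ ^ 2 - ‖u‖ ^ 2)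

namespace ADMMAux

variable {M : ℕ}

lemma mulVecE_eq (A : Matrix (Fin M) (Fin M) ℂ) (x : EuclideanSpace ℂ (Fin M)) :
    mulVecE A x = WithLp.toLp 2 (A.mulVec x) := rfl

lemma mulVecE_add (A : Matrix (Fin M) (Fin M) ℂ) (x y : EuclideanSpace ℂ (Fin M)) :
    mulVecE A (x + y) = mulVecE A x + mulVecE A y := by
  simp only [mulVecE_eq, WithLp.ofLp_add, Matrix.mulVec_add, WithLp.toLp_add]

lemma mulVecE_sub (A : Matrix (Fin M) (Fin M) ℂ) (x y : EuclideanSpace ℂ (Fin M)) :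
    mulVecE A (x - y) = mulVecE A x - mulVecE A y := by
  simp only [mulVecE_eq, WithLp.ofLp_sub, Matrix.mulVec_sub, WithLp.toLp_sub]

lemma mulVecE_smul (A : Matrix (Fin M) (Fin M) ℂ) (c : ℂ) (x : EuclideanSpace ℂ (Fin M)) :
    mulVecE A (c • x) = c • mulVecE A x := by
  simp only [mulVecE_eq, WithLp.ofLp_smul, Matrix.mulVec_smul, WithLp.toLp_smul]

lemma mulVecE_mulVecE (A B : Matrix (Fin M) (Fin M) ℂ) (x : EuclideanSpace ℂ (Fin M)) :
    mulVecE A (mulVecE B x) = mulVecE (A * B) x := by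
  simp only [mulVecE_eq, WithLp.ofLp_toLp, Matrix.mulVec_mulVec]

lemma inner_mulVecE (A : Matrix (Fin M) (Fin M) ℂ) (hA : A.IsHermitian)
    (x y : EuclideanSpace ℂ (Fin M)) :
    (inner ℂ x (mulVecE A y) : ℂ) = inner ℂ (mulVecE A x) y := by
  simp only [EuclideanSpace.inner_eq_star_dotProduct, mulVecE_eq, WithLp.ofLp_toLp]
  rw [Matrix.star_mulVec, hA.eq, dotProduct_comm, dotProduct_comm y, Matrix.dotProduct_mulVec]

lemma repr_mulVecE (A : Matrix (Fin M) (Fin M) ℂ) (hA : A.IsHermitian)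
    (x : EuclideanSpace ℂ (Fin M)) (i : Fin M) :
    hA.eigenvectorBasis.repr (mulVecE A x) i
      = (hA.eigenvalues i : ℂ) * hA.eigenvectorBasis.repr x i := by
  rw [OrthonormalBasis.repr_apply_apply, OrthonormalBasis.repr_apply_apply,
    inner_mulVecE A hA]
  have h : mulVecE A (hA.eigenvectorBasis i) = (hA.eigenvalues i : ℂ) • hA.eigenvectorBasis i := by
    rw [mulVecE_eq, hA.mulVec_eigenvectorBasis i]
    rw [RCLike.real_smul_eq_coe_smul (K := ℂ)]; rfl
  rw [h, inner_smul_left]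
  simp

lemma norm_sq_eq_sum_repr (A : Matrix (Fin M) (Fin M) ℂ) (hA : A.IsHermitian)
    (x : EuclideanSpace ℂ (Fin M)) :
    ‖x‖ ^ 2 = ∑ i, ‖hA.eigenvectorBasis.repr x i‖ ^ 2 := by
  rw [← hA.eigenvectorBasis.repr.norm_map x, EuclideanSpace.norm_eq,
    Real.sq_sqrt (by positivity)]

lemma quad_form_eq (A : Matrix (Fin M) (Fin M) ℂ) (hA : A.IsHermitian)
    (x : EuclideanSpace ℂ (Fin M)) :
    (inner ℂ x (mulVecE A x) : ℂ).re
      = ∑ i, hA.eigenvalues i * ‖hA.eigenvectorBasis.repr x i‖ ^ 2 := by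
  rw [← hA.eigenvectorBasis.repr.inner_map_map x (mulVecE A x)]
  rw [PiLp.inner_apply]
  simp_rw [repr_mulVecE A hA, RCLike.inner_apply]
  rw [Complex.re_sum]
  congr 1; funext i
  set c := hA.eigenvectorBasis.repr x i
  have : (starRingEnd ℂ) c * ((hA.eigenvalues i : ℂ) * c)
      = (hA.eigenvalues i : ℂ) * ((‖c‖ : ℂ) ^ 2) := by
    rw [mul_left_comm]
    congr 1
    rw [← Complex.normSq_eq_conj_mul_self, Complex.normSq_eq_norm_sq]
    norm_cast
  rw [mul_comm, this]
  norm_cast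

lemma norm_mulVecE_sq_eq (A : Matrix (Fin M) (Fin M) ℂ) (hA : A.IsHermitian)
    (x : EuclideanSpace ℂ (Fin M)) :
    ‖mulVecE A x‖ ^ 2 = ∑ i, (hA.eigenvalues i) ^ 2 * ‖hA.eigenvectorBasis.repr x i‖ ^ 2 := by
  rw [norm_sq_eq_sum_repr A hA]
  congr 1; funext i
  rw [repr_mulVecE A hA, norm_mul, mul_pow]
  rw [Complex.norm_real, Real.norm_eq_abs, sq_abs]

lemma quad_lower (A : Matrix (Fin M) (Fin M) ℂ) (hA : A.IsHermitian) {lmin : ℝ}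
    (hmin : ∀ i, lmin ≤ hA.eigenvalues i) (x : EuclideanSpace ℂ (Fin M)) :
    lmin * ‖x‖ ^ 2 ≤ (inner ℂ x (mulVecE A x) : ℂ).re := by
  rw [quad_form_eq A hA, norm_sq_eq_sum_repr A hA, Finset.mul_sum]
  exact Finset.sum_le_sum fun i _ => by
    have := hmin i; nlinarith [sq_nonneg ‖hA.eigenvectorBasis.repr x i‖]

lemma norm_mulVecE_le (A : Matrix (Fin M) (Fin M) ℂ) (hA : A.IsHermitian) {lmax : ℝ}
    (hlm : 0 ≤ lmax)
    (hpos : ∀ i, 0 ≤ hA.eigenvalues i) (hmax : ∀ i, hA.eigenvalues i ≤ lmax)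
    (x : EuclideanSpace ℂ (Fin M)) :
    ‖mulVecE A x‖ ≤ lmax * ‖x‖ := by
  refine le_of_pow_le_pow_left₀ (n := 2) (by norm_num) (by positivity) ?_
  rw [norm_mulVecE_sq_eq A hA, mul_pow, norm_sq_eq_sum_repr A hA, Finset.mul_sum]
  exact Finset.sum_le_sum fun i _ =>
    mul_le_mul_of_nonneg_right (pow_le_pow_left₀ (hpos i) (hmax i) 2) (sq_nonneg _)

/-- real part of the complex inner product -/
noncomputable def rIP (x y : EuclideanSpace ℂ (Fin M)) : ℝ := (inner ℂ x y : ℂ).re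

lemma rIP_comm (x y : EuclideanSpace ℂ (Fin M)) : rIP x y = rIP y x := by
  unfold rIP
  rw [← inner_conj_symm]
  exact Complex.conj_re _

lemma rIP_add_left (x y z : EuclideanSpace ℂ (Fin M)) : rIP (x + y) z = rIP x z + rIP y z := by
  unfold rIP; rw [inner_add_left, Complex.add_re]

lemma rIP_add_right (x y z : EuclideanSpace ℂ (Fin M)) : rIP x (y + z) = rIP x y + rIP x z := by
  unfold rIP; rw [inner_add_right, Complex.add_re]

lemma rIP_sub_left (x y z : EuclideanSpace ℂ (Fin M)) : rIP (x - y) z = rIP x z - rIP y z := by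
  unfold rIP; rw [inner_sub_left, Complex.sub_re]

lemma rIP_sub_right (x y z : EuclideanSpace ℂ (Fin M)) : rIP x (y - z) = rIP x y - rIP x z := by
  unfold rIP; rw [inner_sub_right, Complex.sub_re]

lemma rIP_smul_left (r : ℝ) (x y : EuclideanSpace ℂ (Fin M)) :
    rIP ((r : ℂ) • x) y = r * rIP x y := by
  unfold rIP; rw [inner_smul_left]
  simp [Complex.re_ofReal_mul]

lemma rIP_self (x : EuclideanSpace ℂ (Fin M)) : rIP x x = ‖x‖ ^ 2 := by
  simpa [rIP] using (norm_sq_eq_re_inner (𝕜 := ℂ) x).symm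

lemma norm_sub_sq' (x y : EuclideanSpace ℂ (Fin M)) :
    ‖x - y‖ ^ 2 = ‖x‖ ^ 2 - 2 * rIP x y + ‖y‖ ^ 2 := by
  simpa [rIP] using norm_sub_sq (𝕜 := ℂ) x y

lemma norm_add_sq' (x y : EuclideanSpace ℂ (Fin M)) :
    ‖x + y‖ ^ 2 = ‖x‖ ^ 2 + 2 * rIP x y + ‖y‖ ^ 2 := by
  simpa [rIP] using norm_add_sq (𝕜 := ℂ) x y

lemma abs_rIP_le (x y : EuclideanSpace ℂ (Fin M)) : |rIP x y| ≤ ‖x‖ * ‖y‖ := by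
  refine le_trans ?_ (norm_inner_le_norm (𝕜 := ℂ) x y)
  exact Complex.abs_re_le_norm _

lemma rIP_mulVecE_symm (A : Matrix (Fin M) (Fin M) ℂ) (hA : A.IsHermitian)
    (x y : EuclideanSpace ℂ (Fin M)) : rIP x (mulVecE A y) = rIP y (mulVecE A x) := by
  unfold rIP
  rw [inner_mulVecE A hA, ← inner_conj_symm]
  exact Complex.conj_re _

lemma lagr_eq (Rx : Matrix (Fin M) (Fin M) ℂ) (lam ρ : ℝ) (w v u : EuclideanSpace ℂ (Fin M)) :
    lagr Rx lam ρ w v u = lam * ∑ i, ‖w i‖ + rIP v (mulVecE Rx v)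
      + ρ / 2 * (‖w - v + u‖ ^ 2 - ‖u‖ ^ 2) := rfl

lemma quad_expand (A : Matrix (Fin M) (Fin M) ℂ) (hA : A.IsHermitian)
    (x y : EuclideanSpace ℂ (Fin M)) :
    rIP (x + y) (mulVecE A (x + y))
      = rIP x (mulVecE A x) + rIP y (mulVecE A y) + 2 * rIP y (mulVecE A x) := by
  rw [mulVecE_add, rIP_add_left, rIP_add_right, rIP_add_right, rIP_mulVecE_symm A hA x y]
  ring

/-- The `v`-update decreases the augmented Lagrangian with a strong-convexity margin. -/
lemma vstep_ineq (Rx : Matrix (Fin M) (Fin M) ℂ) (hA : Rx.IsHermitian)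
    {lmin ρ : ℝ} (hmin : ∀ i, lmin ≤ hA.eigenvalues i)
    (lam : ℝ) (wn u vold vnew : EuclideanSpace ℂ (Fin M))
    (hstat : (2 : ℂ) • mulVecE Rx vnew + (ρ : ℂ) • vnew = (ρ : ℂ) • (wn + u)) :
    lagr Rx lam ρ wn vnew u + (lmin + ρ / 2) * ‖vnew - vold‖ ^ 2
      ≤ lagr Rx lam ρ wn vold u := by
  set d := vold - vnew with hd
  have h1 : vold = vnew + d := by rw [hd]; abel
  have h2 : wn - vold + u = (wn - vnew + u) - d := by rw [hd]; abel
  have hq' : rIP vold (mulVecE Rx vold)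
      = rIP vnew (mulVecE Rx vnew) + rIP d (mulVecE Rx d)
        + 2 * rIP d (mulVecE Rx vnew) := by
    rw [h1]; exact quad_expand Rx hA vnew d
  have hnorm : ‖wn - vold + u‖ ^ 2
      = ‖wn - vnew + u‖ ^ 2 - 2 * rIP (wn - vnew + u) d + ‖d‖ ^ 2 := by
    rw [h2, norm_sub_sq']
  have hcancel : ρ * rIP (wn - vnew + u) d = 2 * rIP d (mulVecE Rx vnew) := by
    have hsc : (ρ : ℂ) • (wn - vnew + u) = (2 : ℂ) • mulVecE Rx vnew := by
      calc (ρ : ℂ) • (wn - vnew + u) = (ρ : ℂ) • (wn + u) - (ρ : ℂ) • vnew := by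
            rw [← smul_sub]; congr 1; abel
        _ = (2 : ℂ) • mulVecE Rx vnew := by rw [← hstat]; abel
    have h3 := congrArg (fun z => rIP z d) hsc
    rw [show ((ρ : ℂ)) = (((ρ : ℝ)) : ℂ) by norm_cast, rIP_smul_left] at h3
    rw [show ((2 : ℂ)) = (((2 : ℝ)) : ℂ) by norm_cast, rIP_smul_left] at h3
    rw [h3, rIP_comm]
  have hqd : lmin * ‖d‖ ^ 2 ≤ rIP d (mulVecE Rx d) := quad_lower Rx hA hmin d
  have hdd : ‖vnew - vold‖ = ‖d‖ := by rw [hd, norm_sub_rev]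
  have key : lagr Rx lam ρ wn vold u
      = lagr Rx lam ρ wn vnew u + rIP d (mulVecE Rx d) + ρ / 2 * ‖d‖ ^ 2 := by
    rw [lagr_eq, lagr_eq, hq', hnorm]
    linear_combination -hcancel
  rw [hdd]
  nlinarith [key, hqd]

/-- The dual update increases the augmented Lagrangian by exactly `ρ‖Δu‖²`. -/
lemma ustep_eq (Rx : Matrix (Fin M) (Fin M) ℂ) (lam ρ : ℝ)
    (wn vn uold unew : EuclideanSpace ℂ (Fin M))
    (hun : unew = uold + wn - vn) :
    lagr Rx lam ρ wn vn unew = lagr Rx lam ρ wn vn uold + ρ * ‖unew - uold‖ ^ 2 := by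
  have hr : unew - uold = wn - vn := by rw [hun]; abel
  have e1 : ‖wn - vn + unew‖ ^ 2 = ‖wn - vn‖ ^ 2 + 2 * rIP (wn - vn) unew + ‖unew‖ ^ 2 :=
    norm_add_sq' _ _
  have e2 : ‖wn - vn + uold‖ ^ 2 = ‖wn - vn‖ ^ 2 + 2 * rIP (wn - vn) uold + ‖uold‖ ^ 2 :=
    norm_add_sq' _ _
  have e3 : ‖unew - uold‖ ^ 2 = rIP (wn - vn) unew - rIP (wn - vn) uold := by
    rw [← rIP_sub_right, ← hr, rIP_self]
  rw [lagr_eq, lagr_eq]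
  linear_combination (ρ / 2) * e1 - (ρ / 2) * e2 - ρ * e3

end ADMMAux

open ADMMAux Filter in
set_option maxHeartbeats 2000000 in
/-- Theorem 1, part 2: Under `R_x ≻ 0` and
`ρ ≥ max{2√2·λ_max(R_x), 2λ_max²(R_x)/λ_min(R_x)}`, the successive differences of the ADMM
iterates and the primal residual vanish: `‖v_{k+1} − v_k‖ → 0`, `‖u_{k+1} − u_k‖ → 0`,
`‖w_{k+1} − w_k‖ → 0`, and `‖w_k − v_k‖ → 0`. -/
theorem admm_successive_differences_vanish
    {M : ℕ} (lam ρ : ℝ) (hlam : 0 < lam) (hρ : 0 < ρ)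
    (Rx : Matrix (Fin M) (Fin M) ℂ) (hRx : Rx.PosDef)
    (a0 : EuclideanSpace ℂ (Fin M)) (ha0 : a0 ≠ 0)
    (lmax lmin : ℝ)
    (hlmax : IsGreatest (Set.range hRx.posSemidef.1.eigenvalues) lmax)
    (hlmin : IsLeast (Set.range hRx.posSemidef.1.eigenvalues) lmin)
    (hlmin_pos : 0 < lmin)
    (hρ_big : max (2 * Real.sqrt 2 * lmax) (2 * lmax ^ 2 / lmin) ≤ ρ)
    (w v u : ℕ → EuclideanSpace ℂ (Fin M))
    (hw : ∀ k : ℕ, 1 ≤ ‖(inner ℂ a0 (w (k + 1)) : ℂ)‖ ^ 2 ∧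
      ∀ x : EuclideanSpace ℂ (Fin M), 1 ≤ ‖(inner ℂ a0 x : ℂ)‖ ^ 2 →
        lam * ∑ i, ‖w (k + 1) i‖ + ρ / 2 * ‖w (k + 1) - v k + u k‖ ^ 2 ≤
        lam * ∑ i, ‖x i‖ + ρ / 2 * ‖x - v k + u k‖ ^ 2)
    (hv : ∀ k : ℕ, v (k + 1) = (ρ : ℂ) • mulVecE (2 • Rx + (ρ : ℂ) • 1)⁻¹ (w (k + 1) + u k))
    (hu : ∀ k : ℕ, u (k + 1) = u k + w (k + 1) - v (k + 1)) :
    Filter.Tendsto (fun k : ℕ => ‖v (k + 1) - v k‖) Filter.atTop (nhds 0) ∧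
    Filter.Tendsto (fun k : ℕ => ‖u (k + 1) - u k‖) Filter.atTop (nhds 0) ∧
    Filter.Tendsto (fun k : ℕ => ‖w (k + 1) - w k‖) Filter.atTop (nhds 0) ∧
    Filter.Tendsto (fun k : ℕ => ‖w k - v k‖) Filter.atTop (nhds 0) := by
  classical
  have hH : Rx.IsHermitian := hRx.posSemidef.1
  -- eigenvalue facts
  have hmin : ∀ i, lmin ≤ hH.eigenvalues i := fun i => hlmin.2 ⟨i, rfl⟩
  have hmax : ∀ i, hH.eigenvalues i ≤ lmax := fun i => hlmax.2 ⟨i, rfl⟩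
  have heig_pos : ∀ i, (0:ℝ) < hH.eigenvalues i := fun i => hRx.eigenvalues_pos i
  have heig_nonneg : ∀ i, (0:ℝ) ≤ hH.eigenvalues i := fun i => (heig_pos i).le
  have hlmax_pos : 0 < lmax := by
    obtain ⟨i, hi⟩ := hlmax.1
    exact hi ▸ heig_pos i
  have hρ1 : 2 * Real.sqrt 2 * lmax ≤ ρ := le_trans (le_max_left _ _) hρ_big
  have hρ2 : 2 * lmax ^ 2 / lmin ≤ ρ := le_trans (le_max_right _ _) hρ_big
  have hlml : lmin ≤ lmax := by
    obtain ⟨i, hi⟩ := hlmax.1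
    exact hi ▸ hmin i
  have hsqrt2 : (1:ℝ) < Real.sqrt 2 := by
    nlinarith [Real.sq_sqrt (by norm_num : (2:ℝ) ≥ 0), Real.sqrt_nonneg 2]
  have h4lem : 4 * lmax ^ 2 / ρ ≤ 2 * lmin := by
    rw [div_le_iff₀ hρ]
    rw [div_le_iff₀ hlmin_pos] at hρ2
    nlinarith
  have hρlmin : 2 * lmin < ρ := by nlinarith
  have hlem2 : 2 * lmax ^ 2 / ρ ≤ lmin := by
    rw [div_le_iff₀ hρ]
    rw [div_le_iff₀ hρ] at h4lem
    nlinarith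
  obtain ⟨cst, hcst_def⟩ : ∃ c : ℝ, c = lmin + ρ / 2 - 4 * lmax ^ 2 / ρ := ⟨_, rfl⟩
  have hcst : 0 < cst := by rw [hcst_def]; nlinarith
  -- the matrix S and iterate relations
  set S : Matrix (Fin M) (Fin M) ℂ := 2 • Rx + (ρ : ℂ) • 1 with hS_def
  have hSpos : S.PosDef := by
    have h1 : ((ρ : ℂ) • (1 : Matrix (Fin M) (Fin M) ℂ)).PosDef := by
      rw [Matrix.smul_one_eq_diagonal]
      exact Matrix.PosDef.diagonal fun i => Complex.zero_lt_real.mpr hρ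
    have h2 : (2 • Rx : Matrix (Fin M) (Fin M) ℂ).PosDef := by
      rw [two_smul]; exact hRx.add hRx
    exact h2.add h1
  have hSinv : ∀ y : EuclideanSpace ℂ (Fin M), mulVecE S (mulVecE S⁻¹ y) = y := by
    intro y
    rw [mulVecE_mulVecE, Matrix.mul_nonsing_inv _ ((Matrix.isUnit_iff_isUnit_det _).mp hSpos.isUnit)]
    simp [mulVecE_eq]
  have hmulS : ∀ x : EuclideanSpace ℂ (Fin M),
      mulVecE S x = (2 : ℂ) • mulVecE Rx x + (ρ : ℂ) • x := by
    intro x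
    have h2 : (2 • Rx : Matrix (Fin M) (Fin M) ℂ) = (2 : ℂ) • Rx := by
      rw [← Nat.cast_smul_eq_nsmul ℂ 2 Rx]; norm_num
    rw [hS_def, h2, mulVecE_eq, Matrix.add_mulVec, Matrix.smul_mulVec,
      Matrix.smul_mulVec, Matrix.one_mulVec]
    rfl
  have hstat : ∀ k : ℕ, (2 : ℂ) • mulVecE Rx (v (k + 1)) + (ρ : ℂ) • v (k + 1)
      = (ρ : ℂ) • (w (k + 1) + u k) := by
    intro k
    have h := congrArg (mulVecE S) (hv k)
    rw [mulVecE_smul, hSinv] at h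
    rw [← hmulS]
    exact h
  have hurel : ∀ k : ℕ, (ρ : ℂ) • u (k + 1) = (2 : ℂ) • mulVecE Rx (v (k + 1)) := by
    intro k
    rw [hu k]
    calc (ρ : ℂ) • (u k + w (k + 1) - v (k + 1))
        = (ρ : ℂ) • (w (k + 1) + u k) - (ρ : ℂ) • v (k + 1) := by
          rw [← smul_sub]; congr 1; abel
      _ = (2 : ℂ) • mulVecE Rx (v (k + 1)) := by rw [← hstat k]; abel
  -- norm bound machine: ρ•x = 2•Rx y ⇒ ‖x‖ ≤ (2 lmax/ρ)‖y‖
  have key : ∀ x y : EuclideanSpace ℂ (Fin M),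
      (ρ : ℂ) • x = (2 : ℂ) • mulVecE Rx y → ‖x‖ ≤ 2 * lmax / ρ * ‖y‖ := by
    intro x y hxy
    have h := congrArg (‖·‖) hxy
    simp only [norm_smul] at h
    have h2 : ρ * ‖x‖ = 2 * ‖mulVecE Rx y‖ := by
      rw [show ‖(ρ:ℂ)‖ = ρ by rw [Complex.norm_real, Real.norm_eq_abs, abs_of_pos hρ],
        show ‖(2:ℂ)‖ = 2 by norm_num] at h
      exact h
    have h3 := norm_mulVecE_le Rx hH hlmax_pos.le heig_nonneg hmax y
    rw [show 2 * lmax / ρ * ‖y‖ = 2 * lmax * ‖y‖ / ρ by ring, le_div_iff₀ hρ]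
    nlinarith
  have hu_norm : ∀ k : ℕ, ‖u (k + 1)‖ ≤ 2 * lmax / ρ * ‖v (k + 1)‖ :=
    fun k => key _ _ (hurel k)
  have hdu : ∀ k : ℕ, ‖u (k + 2) - u (k + 1)‖ ≤ 2 * lmax / ρ * ‖v (k + 2) - v (k + 1)‖ := by
    intro k
    refine key _ _ ?_
    rw [smul_sub, mulVecE_sub, smul_sub]
    exact congrArg₂ (· - ·) (hurel (k + 1)) (hurel k)
  -- descent inequality
  have descent : ∀ k : ℕ,
      lagr Rx lam ρ (w (k + 2)) (v (k + 2)) (u (k + 2)) + cst * ‖v (k + 2) - v (k + 1)‖ ^ 2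
        ≤ lagr Rx lam ρ (w (k + 1)) (v (k + 1)) (u (k + 1)) := by
    intro k
    have s1 : lagr Rx lam ρ (w (k + 2)) (v (k + 1)) (u (k + 1))
        ≤ lagr Rx lam ρ (w (k + 1)) (v (k + 1)) (u (k + 1)) := by
      have hfeas := (hw k).1
      have h : lam * ∑ i, ‖w (k + 2) i‖
          + ρ / 2 * ‖w (k + 2) - v (k + 1) + u (k + 1)‖ ^ 2 ≤
          lam * ∑ i, ‖w (k + 1) i‖
          + ρ / 2 * ‖w (k + 1) - v (k + 1) + u (k + 1)‖ ^ 2 :=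
        (hw (k + 1)).2 (w (k + 1)) hfeas
      rw [lagr_eq, lagr_eq]
      linarith
    have s2 : lagr Rx lam ρ (w (k + 2)) (v (k + 2)) (u (k + 1))
        + (lmin + ρ / 2) * ‖v (k + 2) - v (k + 1)‖ ^ 2
        ≤ lagr Rx lam ρ (w (k + 2)) (v (k + 1)) (u (k + 1)) :=
      vstep_ineq Rx hH hmin lam (w (k + 2)) (u (k + 1)) (v (k + 1)) (v (k + 2)) (hstat (k + 1))
    have s3 : lagr Rx lam ρ (w (k + 2)) (v (k + 2)) (u (k + 2))
        = lagr Rx lam ρ (w (k + 2)) (v (k + 2)) (u (k + 1))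
          + ρ * ‖u (k + 2) - u (k + 1)‖ ^ 2 :=
      ustep_eq Rx lam ρ (w (k + 2)) (v (k + 2)) (u (k + 1)) (u (k + 2)) (hu (k + 1))
    have s4 : ρ * ‖u (k + 2) - u (k + 1)‖ ^ 2
        ≤ 4 * lmax ^ 2 / ρ * ‖v (k + 2) - v (k + 1)‖ ^ 2 := by
      have h1 : ‖u (k + 2) - u (k + 1)‖ ^ 2
          ≤ (2 * lmax / ρ * ‖v (k + 2) - v (k + 1)‖) ^ 2 :=
        pow_le_pow_left₀ (norm_nonneg _) (hdu k) 2
      calc ρ * ‖u (k + 2) - u (k + 1)‖ ^ 2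
          ≤ ρ * (2 * lmax / ρ * ‖v (k + 2) - v (k + 1)‖) ^ 2 :=
            mul_le_mul_of_nonneg_left h1 hρ.le
        _ = 4 * lmax ^ 2 / ρ * ‖v (k + 2) - v (k + 1)‖ ^ 2 := by
            field_simp; ring
    have hexp : cst * ‖v (k + 2) - v (k + 1)‖ ^ 2
        = lmin * ‖v (k + 2) - v (k + 1)‖ ^ 2 + ρ / 2 * ‖v (k + 2) - v (k + 1)‖ ^ 2
          - 4 * lmax ^ 2 / ρ * ‖v (k + 2) - v (k + 1)‖ ^ 2 := by
      rw [hcst_def]; ring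
    have hexp2 : (lmin + ρ / 2) * ‖v (k + 2) - v (k + 1)‖ ^ 2
        = lmin * ‖v (k + 2) - v (k + 1)‖ ^ 2 + ρ / 2 * ‖v (k + 2) - v (k + 1)‖ ^ 2 := by ring
    linarith
  -- lower bound
  have hlow : ∀ k : ℕ, 0 ≤ lagr Rx lam ρ (w (k + 1)) (v (k + 1)) (u (k + 1)) := by
    intro k
    have h1 := hu_norm k
    have h2 : lmin * ‖v (k + 1)‖ ^ 2 ≤ rIP (v (k + 1)) (mulVecE Rx (v (k + 1))) :=
      quad_lower Rx hH hmin (v (k + 1))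
    have h3 : 0 ≤ lam * ∑ i, ‖w (k + 1) i‖ :=
      mul_nonneg hlam.le (Finset.sum_nonneg fun i _ => norm_nonneg _)
    have h4 : ‖w (k + 1) - v (k + 1) + u (k + 1)‖ ^ 2
        = ‖w (k + 1) - v (k + 1)‖ ^ 2 + 2 * rIP (w (k + 1) - v (k + 1)) (u (k + 1))
          + ‖u (k + 1)‖ ^ 2 := norm_add_sq' _ _
    have h5 := abs_rIP_le (w (k + 1) - v (k + 1)) (u (k + 1))
    have h5' := (abs_le.mp h5).1
    have h6 : ρ / 2 * ‖u (k + 1)‖ ^ 2 ≤ lmin * ‖v (k + 1)‖ ^ 2 := by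
      have ha : ‖u (k + 1)‖ ^ 2 ≤ (2 * lmax / ρ * ‖v (k + 1)‖) ^ 2 :=
        pow_le_pow_left₀ (norm_nonneg _) h1 2
      calc ρ / 2 * ‖u (k + 1)‖ ^ 2 ≤ ρ / 2 * (2 * lmax / ρ * ‖v (k + 1)‖) ^ 2 :=
            mul_le_mul_of_nonneg_left ha (by positivity)
        _ = 2 * lmax ^ 2 / ρ * ‖v (k + 1)‖ ^ 2 := by field_simp
        _ ≤ lmin * ‖v (k + 1)‖ ^ 2 :=
            mul_le_mul_of_nonneg_right hlem2 (sq_nonneg _)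
    have h7 : 0 ≤ ‖w (k + 1) - v (k + 1)‖ ^ 2
        + 2 * rIP (w (k + 1) - v (k + 1)) (u (k + 1)) + ‖u (k + 1)‖ ^ 2 := by
      nlinarith [sq_nonneg (‖w (k + 1) - v (k + 1)‖ - ‖u (k + 1)‖)]
    have h8 : -(ρ / 2 * ‖u (k + 1)‖ ^ 2)
        ≤ ρ / 2 * (‖w (k + 1) - v (k + 1) + u (k + 1)‖ ^ 2 - ‖u (k + 1)‖ ^ 2) := by
      rw [h4]
      nlinarith [mul_nonneg (by positivity : (0:ℝ) ≤ ρ / 2) h7]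
    rw [lagr_eq]
    linarith
  -- convergence of the Lagrangian values
  obtain ⟨F, hF⟩ : ∃ F : ℕ → ℝ, ∀ k, F k = lagr Rx lam ρ (w (k + 1)) (v (k + 1)) (u (k + 1)) :=
    ⟨_, fun k => rfl⟩
  have hFanti : Antitone F := antitone_nat_of_succ_le fun k => by
    rw [hF, hF]
    have := descent k
    nlinarith [mul_nonneg hcst.le (pow_nonneg (norm_nonneg (v (k + 2) - v (k + 1))) 2)]
  have hFbdd : BddBelow (Set.range F) := by
    refine ⟨0, ?_⟩
    rintro x ⟨k, rfl⟩
    rw [hF]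
    exact hlow k
  have hFlim : Tendsto F atTop (nhds (⨅ i, F i)) := tendsto_atTop_ciInf hFanti hFbdd
  have hFlim' : Tendsto (fun k => F (k + 1)) atTop (nhds (⨅ i, F i)) :=
    hFlim.comp (tendsto_add_atTop_nat 1)
  have hgap : Tendsto (fun k => F k - F (k + 1)) atTop (nhds 0) := by
    simpa using hFlim.sub hFlim'
  have hgap_ge : ∀ k, cst * ‖v (k + 2) - v (k + 1)‖ ^ 2 ≤ F k - F (k + 1) := by
    intro k
    rw [hF, hF]
    have := descent k
    linarith
  have hg0 : Tendsto (fun k => cst * ‖v (k + 2) - v (k + 1)‖ ^ 2) atTop (nhds 0) :=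
    squeeze_zero (fun k => mul_nonneg hcst.le (pow_nonneg (norm_nonneg _) 2)) hgap_ge hgap
  have hΔv2 : Tendsto (fun k => ‖v (k + 2) - v (k + 1)‖ ^ 2) atTop (nhds 0) := by
    have h := hg0.const_mul cst⁻¹
    rw [mul_zero] at h
    have heq : (fun k => cst⁻¹ * (cst * ‖v (k + 2) - v (k + 1)‖ ^ 2))
        = fun k => ‖v (k + 2) - v (k + 1)‖ ^ 2 := by
      funext k; field_simp
    rwa [heq] at h
  have hΔv : Tendsto (fun k => ‖v (k + 2) - v (k + 1)‖) atTop (nhds 0) := by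
    have h : Tendsto (fun k => Real.sqrt (‖v (k + 2) - v (k + 1)‖ ^ 2)) atTop (nhds 0) := by
      have := (Real.continuous_sqrt.tendsto' 0 0 (by simp)).comp hΔv2
      exact this
    have heq : (fun k => Real.sqrt (‖v (k + 2) - v (k + 1)‖ ^ 2))
        = fun k => ‖v (k + 2) - v (k + 1)‖ := by
      funext k; exact Real.sqrt_sq (norm_nonneg _)
    rwa [heq] at h
  have goal1 : Tendsto (fun k : ℕ => ‖v (k + 1) - v k‖) atTop (nhds 0) :=
    (Filter.tendsto_add_atTop_iff_nat (f := fun k : ℕ => ‖v (k + 1) - v k‖) 1).mp hΔv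
  have hΔu : Tendsto (fun k => ‖u (k + 2) - u (k + 1)‖) atTop (nhds 0) := by
    refine squeeze_zero (fun k => norm_nonneg _) hdu ?_
    have := hΔv.const_mul (2 * lmax / ρ)
    rwa [mul_zero] at this
  have goal2 : Tendsto (fun k : ℕ => ‖u (k + 1) - u k‖) atTop (nhds 0) :=
    (Filter.tendsto_add_atTop_iff_nat (f := fun k : ℕ => ‖u (k + 1) - u k‖) 1).mp hΔu
  have hΔw_le : ∀ k : ℕ, ‖w (k + 2) - w (k + 1)‖
      ≤ ‖u (k + 2) - u (k + 1)‖ + ‖u (k + 1) - u k‖ + ‖v (k + 2) - v (k + 1)‖ := by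
    intro k
    have e1 : u (k + 2) = u (k + 1) + w (k + 2) - v (k + 2) := hu (k + 1)
    have e2 : u (k + 1) = u k + w (k + 1) - v (k + 1) := hu k
    have e : w (k + 2) - w (k + 1)
        = (u (k + 2) - u (k + 1)) - (u (k + 1) - u k) + (v (k + 2) - v (k + 1)) := by
      rw [e1]
      nth_rewrite 3 [e2]
      abel
    rw [e]
    refine le_trans (norm_add_le _ _) ?_
    have := norm_sub_le (u (k + 2) - u (k + 1)) (u (k + 1) - u k)
    linarith
  have hΔw : Tendsto (fun k => ‖w (k + 2) - w (k + 1)‖) atTop (nhds 0) := by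
    refine squeeze_zero (fun k => norm_nonneg _) hΔw_le ?_
    have h := (hΔu.add goal2).add hΔv
    simpa using h
  have goal3 : Tendsto (fun k : ℕ => ‖w (k + 1) - w k‖) atTop (nhds 0) :=
    (Filter.tendsto_add_atTop_iff_nat (f := fun k : ℕ => ‖w (k + 1) - w k‖) 1).mp hΔw
  have goal4 : Tendsto (fun k : ℕ => ‖w k - v k‖) atTop (nhds 0) := by
    refine (Filter.tendsto_add_atTop_iff_nat (f := fun k : ℕ => ‖w k - v k‖) 1).mp ?_
    have heq : (fun k : ℕ => ‖w (k + 1) - v (k + 1)‖) = fun k : ℕ => ‖u (k + 1) - u k‖ := by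
      funext k
      congr 1
      rw [hu k]
      abel
    rw [show (fun k : ℕ => ‖w (k + 1) - v (k + 1)‖) = fun k : ℕ => ‖u (k + 1) - u k‖ from heq]
    exact goal2
  exact ⟨goal1, goal2, goal3, goal4⟩
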